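/- Let Ω ⊆ ℝⁿ be open and u : Ω → ℝ^N a C² immersion solving the tangential system K_P(Du(x))·∇(K∘Du)(x) = 0 on Ω. Let U ⊆ Ω be an open connected set on which S(Du(x)ᵀDu(x)) is invertible for every x ∈ U. Then the dilation x ↦ K(Du(x)) is constant on U. -/

import Mathlib

open Matrix

/-- The dilation function `K(P) = |P|² / det(PᵀP)^(1/n)`, where `|P|² = tr(PᵀP)`. -/
noncomputable def dil {N n : ℕ} (P : Matrix (Fin N) (Fin n) ℝ) : ℝ :=
  (Pᵀ * P).trace / (Pᵀ * P).det ^ ((1 : ℝ) / n)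

/-- The Ahlfors operator `S(A) = (A + Aᵀ)/2 − (tr(A)/n)·I`. -/
noncomputable def ahl {n : ℕ} (A : Matrix (Fin n) (Fin n) ℝ) : Matrix (Fin n) (Fin n) ℝ :=
  (2⁻¹ : ℝ) • (A + Aᵀ) - (A.trace / (n : ℝ)) • 1

/-- `K_P(P) = 2·P·(PᵀP)⁻¹·S(PᵀP)/det(PᵀP)^(1/n)`. -/
noncomputable def dilGrad {N n : ℕ} (P : Matrix (Fin N) (Fin n) ℝ) : Matrix (Fin N) (Fin n) ℝ :=
  (2 / (Pᵀ * P).det ^ ((1 : ℝ) / n)) • (P * (Pᵀ * P)⁻¹ * ahl (Pᵀ * P))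

/-- The Jacobian matrix `Du(x) ∈ ℝ^{N×n}` of a map `u : ℝⁿ → ℝ^N`. -/
noncomputable def jac {n N : ℕ} (u : EuclideanSpace ℝ (Fin n) → (Fin N → ℝ))
    (x : EuclideanSpace ℝ (Fin n)) : Matrix (Fin N) (Fin n) ℝ :=
  Matrix.of fun α i => fderiv ℝ u x (EuclideanSpace.single i 1) α

/-- The gradient of a scalar function on `ℝⁿ`. -/
noncomputable def egrad {n : ℕ} (f : EuclideanSpace ℝ (Fin n) → ℝ)
    (x : EuclideanSpace ℝ (Fin n)) : Fin n → ℝ :=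
  fun i => fderiv ℝ f x (EuclideanSpace.single i 1)

lemma key {N n : ℕ} (P : Matrix (Fin N) (Fin n) ℝ) (hdet : 0 < (Pᵀ * P).det)
    (hS : IsUnit (ahl (Pᵀ * P))) (v : Fin n → ℝ)
    (hv : (dilGrad P).mulVec v = 0) : v = 0 := by
  set A := Pᵀ * P with hA
  have hc : (2 / A.det ^ ((1 : ℝ) / n)) ≠ 0 := by
    positivity
  have h1 : (P * A⁻¹ * ahl A).mulVec v = 0 := by
    have := hv
    rw [dilGrad, Matrix.smul_mulVec] at this
    have := smul_eq_zero.mp this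
    rcases this with h | h
    · exact absurd h hc
    · exact h
  have h2 : (ahl A).mulVec v = 0 := by
    have h3 := congrArg (fun w => Pᵀ.mulVec w) h1
    simp only [Matrix.mulVec_zero] at h3
    rw [Matrix.mulVec_mulVec, ← Matrix.mul_assoc, ← Matrix.mul_assoc, ← hA,
      Matrix.mul_nonsing_inv A (isUnit_iff_ne_zero.mpr hdet.ne'), Matrix.one_mul] at h3
    exact h3
  have hinj := Matrix.mulVec_injective_iff_isUnit.mpr hS
  have : (ahl A).mulVec v = (ahl A).mulVec 0 := by simpa using h2
  exact hinj this


lemma diff_finset_prod {ι : Type*} (s : Finset ι) {E : Type*} [NormedAddCommGroup E]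
    [NormedSpace ℝ E] (f : ι → E → ℝ) {x : E} (h : ∀ i ∈ s, DifferentiableAt ℝ (f i) x) :
    DifferentiableAt ℝ (fun y => ∏ i ∈ s, f i y) x := by
  classical
  induction s using Finset.induction with
  | empty => simpa using differentiableAt_const (1 : ℝ)
  | @insert a s hni ih =>
    simp only [Finset.prod_insert hni]
    exact (h a (Finset.mem_insert_self a s)).mul
      (ih fun i hi => h i (Finset.mem_insert_of_mem hi))


lemma entry_diff {n N : ℕ} {Ω : Set (EuclideanSpace ℝ (Fin n))} (hΩ : IsOpen Ω)
    {u : EuclideanSpace ℝ (Fin n) → (Fin N → ℝ)} (hu : ContDiffOn ℝ 2 u Ω)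
    {x : EuclideanSpace ℝ (Fin n)} (hx : x ∈ Ω) (α : Fin N) (i : Fin n) :
    DifferentiableAt ℝ (fun y => jac u y α i) x := by
  have h1 : ContDiffOn ℝ 1 (fderiv ℝ u) Ω := hu.fderiv_of_isOpen hΩ (by norm_num)
  have hD : DifferentiableAt ℝ (fderiv ℝ u) x :=
    (h1.differentiableOn one_ne_zero).differentiableAt (hΩ.mem_nhds hx)
  have hg : DifferentiableAt ℝ (fun y => fderiv ℝ u y (EuclideanSpace.single i 1)) x :=
    hD.clm_apply (differentiableAt_const _)
  exact differentiableAt_pi.mp hg α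


lemma gram_entry_diff {n N : ℕ} {Ω : Set (EuclideanSpace ℝ (Fin n))} (hΩ : IsOpen Ω)
    {u : EuclideanSpace ℝ (Fin n) → (Fin N → ℝ)} (hu : ContDiffOn ℝ 2 u Ω)
    {x : EuclideanSpace ℝ (Fin n)} (hx : x ∈ Ω) (i j : Fin n) :
    DifferentiableAt ℝ (fun y => ((jac u y)ᵀ * jac u y) i j) x := by
  simp only [Matrix.mul_apply, Matrix.transpose_apply]
  exact DifferentiableAt.fun_sum fun α _ =>
    (entry_diff hΩ hu hx α i).mul (entry_diff hΩ hu hx α j)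


lemma dil_diff {n N : ℕ} {Ω : Set (EuclideanSpace ℝ (Fin n))} (hΩ : IsOpen Ω)
    {u : EuclideanSpace ℝ (Fin n) → (Fin N → ℝ)} (hu : ContDiffOn ℝ 2 u Ω)
    (himm : ∀ x ∈ Ω, 0 < ((jac u x)ᵀ * jac u x).det)
    {x : EuclideanSpace ℝ (Fin n)} (hx : x ∈ Ω) :
    DifferentiableAt ℝ (fun y => dil (jac u y)) x := by
  have hT : DifferentiableAt ℝ (fun y => ((jac u y)ᵀ * jac u y).trace) x := by
    simp only [Matrix.trace, Matrix.diag]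
    exact DifferentiableAt.fun_sum fun i _ => gram_entry_diff hΩ hu hx i i
  have hDet : DifferentiableAt ℝ (fun y => ((jac u y)ᵀ * jac u y).det) x := by
    have : ∀ y, ((jac u y)ᵀ * jac u y).det = ∑ σ : Equiv.Perm (Fin n),
        ((Equiv.Perm.sign σ : ℤ) : ℝ) * ∏ i, ((jac u y)ᵀ * jac u y) (σ i) i := by
      intro y
      rw [Matrix.det_apply]
      simp [Units.smul_def, zsmul_eq_mul]
    simp only [this]
    exact DifferentiableAt.fun_sum fun σ _ => (differentiableAt_const _).mul
      (diff_finset_prod Finset.univ (fun i y => ((jac u y)ᵀ * jac u y) (σ i) i)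
        fun i _ => gram_entry_diff hΩ hu hx (σ i) i)
  have hpow : DifferentiableAt ℝ (fun y => ((jac u y)ᵀ * jac u y).det ^ ((1 : ℝ) / n)) x := by
    exact (Real.differentiableAt_rpow_const_of_ne _ (himm x hx).ne').comp x hDet
  have hne : ((jac u x)ᵀ * jac u x).det ^ ((1 : ℝ) / n) ≠ 0 :=
    (Real.rpow_pos_of_pos (himm x hx) _).ne'
  simp only [dil, div_eq_mul_inv]
  exact hT.mul (hpow.inv hne)


lemma fderiv_eq_zero_of_egrad_zero {n : ℕ} (f : EuclideanSpace ℝ (Fin n) → ℝ)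
    (x : EuclideanSpace ℝ (Fin n)) (h : egrad f x = 0) : fderiv ℝ f x = 0 := by
  apply ContinuousLinearMap.coe_injective
  apply Module.Basis.ext (EuclideanSpace.basisFun (Fin n) ℝ).toBasis
  intro i
  have := congrFun h i
  simp only [egrad, Pi.zero_apply] at this
  simp [EuclideanSpace.basisFun_apply, this]

/-- if a `C²` immersion `u` solves the tangential system on `Ω`, and `U ⊆ Ω`
is an open connected set on which `S(DuᵀDu)` is invertible, then `K(Du)` is constant on `U`. -/
theorem constant_dilation_on_invertible_phase (n N : ℕ)
    (Ω : Set (EuclideanSpace ℝ (Fin n))) (hΩ : IsOpen Ω)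
    (u : EuclideanSpace ℝ (Fin n) → (Fin N → ℝ))
    (hu : ContDiffOn ℝ 2 u Ω)
    (himm : ∀ x ∈ Ω, 0 < ((jac u x)ᵀ * jac u x).det)
    (htang : ∀ x ∈ Ω, (dilGrad (jac u x)).mulVec (egrad (fun y => dil (jac u y)) x) = 0)
    (U : Set (EuclideanSpace ℝ (Fin n))) (hUΩ : U ⊆ Ω) (hUopen : IsOpen U)
    (hUconn : IsConnected U)
    (hinv : ∀ x ∈ U, IsUnit (ahl ((jac u x)ᵀ * jac u x))) :
    ∃ c : ℝ, ∀ x ∈ U, dil (jac u x) = c := by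
  set f : EuclideanSpace ℝ (Fin n) → ℝ := fun y => dil (jac u y) with hf
  have hf0 : ∀ x ∈ U, fderiv ℝ f x = 0 := by
    intro x hx
    apply fderiv_eq_zero_of_egrad_zero
    exact key (jac u x) (himm x (hUΩ hx)) (hinv x hx) _ (htang x (hUΩ hx))
  have hdiff : ∀ x ∈ U, DifferentiableAt ℝ f x := fun x hx =>
    dil_diff hΩ hu himm (hUΩ hx)
  obtain ⟨x₀, hx₀⟩ := hUconn.nonempty
  refine ⟨f x₀, fun x hx => ?_⟩
  -- local constancy from vanishing derivative on balls
  have hlc : ∀ x ∈ U, ∃ ε > 0, Metric.ball x ε ⊆ U ∧ ∀ y ∈ Metric.ball x ε, f y = f x := by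
    intro x hx
    obtain ⟨ε, hε, hball⟩ := Metric.isOpen_iff.mp hUopen x hx
    refine ⟨ε, hε, hball, fun y hy => ?_⟩
    refine (convex_ball x ε).is_const_of_fderivWithin_eq_zero
      (fun z hz => (hdiff z (hball hz)).differentiableWithinAt) (fun z hz => ?_) hy
      (Metric.mem_ball_self hε)
    rw [fderivWithin_of_isOpen Metric.isOpen_ball hz]
    exact hf0 z (hball hz)
  set V₁ : Set (EuclideanSpace ℝ (Fin n)) := {y | y ∈ U ∧ f y = f x₀} with hV₁
  set V₂ : Set (EuclideanSpace ℝ (Fin n)) := {y | y ∈ U ∧ f y ≠ f x₀} with hV₂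
  have hV₁open : IsOpen V₁ := by
    rw [Metric.isOpen_iff]
    rintro y ⟨hyU, hyf⟩
    obtain ⟨ε, hε, hball, hconst⟩ := hlc y hyU
    exact ⟨ε, hε, fun z hz => ⟨hball hz, (hconst z hz).trans hyf⟩⟩
  have hV₂open : IsOpen V₂ := by
    rw [Metric.isOpen_iff]
    rintro y ⟨hyU, hyf⟩
    obtain ⟨ε, hε, hball, hconst⟩ := hlc y hyU
    exact ⟨ε, hε, fun z hz => ⟨hball hz, (hconst z hz).symm ▸ hyf⟩⟩
  by_contra hcon
  have hcover : U ⊆ V₁ ∪ V₂ := fun y hy => by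
    by_cases hfy : f y = f x₀
    · exact Or.inl ⟨hy, hfy⟩
    · exact Or.inr ⟨hy, hfy⟩
  have h1 : (U ∩ V₁).Nonempty := ⟨x₀, hx₀, hx₀, rfl⟩
  have h2 : (U ∩ V₂).Nonempty := ⟨x, hx, hx, hcon⟩
  obtain ⟨z, _, ⟨_, hz1⟩, ⟨_, hz2⟩⟩ :=
    hUconn.isPreconnected V₁ V₂ hV₁open hV₂open hcover h1 h2
  exact hz2 hz1
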